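/- Let A1 = (0,a), A2 = (b,0), A3 = (0,c) be points of Z^2 with b ≥ 0 and c ≥ a ≥ 0. Then there exists a point Y on the union of the two positive axes {(s,0): s ≥ 0} ∪ {(0,s): s ≥ 0} such that d(A1,Y) + d(A2,Y) + d(A3,Y) = min over all X ∈ Z^2 of d(A1,X) + d(A2,X) + d(A3,X), where d is the asymmetric lattice distance on Γ. -/

import Mathlib

/-- The forward steps of the directed graph `Γ` on `ℤ × ℤ`:
from `(x,y)` there are edges to `(x+1,y)`, `(x,y+1)`, `(x-1,y-1)`. -/
def fwdSteps : List (ℤ × ℤ) := [(1, 0), (0, 1), (-1, -1)]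

/-- A step of a path: an edge traversed either forwards or backwards. -/
def IsStep (s : ℤ × ℤ) : Prop := s ∈ fwdSteps ∨ -s ∈ fwdSteps

/-- The cost of a step: `1/3` forwards, `2/3` backwards. -/
noncomputable def stepCost (s : ℤ × ℤ) : ℝ :=
  if s ∈ fwdSteps then 1/3 else 2/3

/-- The length of a path, given as its list of steps. -/
noncomputable def pathLen (l : List (ℤ × ℤ)) : ℝ := (l.map stepCost).sum

/-- The set of lengths of paths from `a` to `b` in `Γ`. -/
def pathLengths (a b : ℤ × ℤ) : Set ℝ :=
  {c | ∃ l : List (ℤ × ℤ), (∀ s ∈ l, IsStep s) ∧ a + l.sum = b ∧ pathLen l = c}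

/-- The asymmetric distance on `Γ`: the infimum (in fact minimum) of path lengths. -/
noncomputable def latticeDist (a b : ℤ × ℤ) : ℝ := sInf (pathLengths a b)

/-- for `A₁ = (0,a)`, `A₂ = (b,0)`, `A₃ = (0,c)` with `b ≥ 0` and
`c ≥ a ≥ 0`, the minimum of `d(A₁,X) + d(A₂,X) + d(A₃,X)` over all `X ∈ ℤ²` is attained
at some point `Y` on the union of the two nonnegative axes. -/


lemma stepCost_nonneg (s : ℤ × ℤ) : 0 ≤ stepCost s := by
  unfold stepCost; split <;> norm_num

lemma pathLen_nonneg (l : List (ℤ × ℤ)) : 0 ≤ pathLen l := by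
  unfold pathLen
  apply List.sum_nonneg
  intro x hx
  simp only [List.mem_map] at hx
  obtain ⟨s, _, rfl⟩ := hx
  exact stepCost_nonneg s

lemma pathLengths_bddBelow (p q : ℤ × ℤ) : BddBelow (pathLengths p q) := by
  refine ⟨0, ?_⟩
  rintro r ⟨l, -, -, rfl⟩
  exact pathLen_nonneg l

lemma latticeDist_le (p q : ℤ × ℤ) (l : List (ℤ × ℤ)) (h1 : ∀ s ∈ l, IsStep s)
    (h2 : p + l.sum = q) : latticeDist p q ≤ pathLen l :=
  csInf_le (pathLengths_bddBelow p q) ⟨l, h1, h2, rfl⟩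

lemma nsmul_pair (n : ℕ) (a b : ℤ) : n • ((a, b) : ℤ × ℤ) = ((n : ℤ) * a, (n : ℤ) * b) := by
  rw [Prod.smul_mk]
  simp [nsmul_eq_mul]

lemma exists_path (p q : ℤ × ℤ) : ∃ l : List (ℤ × ℤ), (∀ s ∈ l, IsStep s) ∧ p + l.sum = q := by
  refine ⟨List.replicate (q.1 - p.1).toNat (1, 0) ++ List.replicate (p.1 - q.1).toNat (-1, 0)
    ++ List.replicate (q.2 - p.2).toNat (0, 1) ++ List.replicate (p.2 - q.2).toNat (0, -1), ?_, ?_⟩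
  · intro s hs
    simp only [List.mem_append, List.mem_replicate] at hs
    rcases hs with ((⟨-, rfl⟩ | ⟨-, rfl⟩) | ⟨-, rfl⟩) | ⟨-, rfl⟩
    exacts [Or.inl (by decide), Or.inr (by decide), Or.inl (by decide), Or.inr (by decide)]
  · simp only [List.sum_append, List.sum_replicate, nsmul_pair]
    rw [Prod.ext_iff]
    constructor <;> simp <;> omega

lemma latticeDist_le_two_rep (p q s t : ℤ × ℤ) (hs : s ∈ fwdSteps) (ht : t ∈ fwdSteps)
    (m n : ℕ) (hsum : p + (m • s + n • t) = q) :
    latticeDist p q ≤ ((m : ℝ) + n) / 3 := by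
  have h := latticeDist_le p q (List.replicate m s ++ List.replicate n t) ?_ ?_
  · refine h.trans_eq ?_
    rw [pathLen, List.map_append, List.map_replicate, List.map_replicate,
      List.sum_append, List.sum_replicate, List.sum_replicate, stepCost, stepCost,
      if_pos hs, if_pos ht]
    simp [nsmul_eq_mul]
    ring
  · intro x hx
    simp only [List.mem_append, List.mem_replicate] at hx
    rcases hx with ⟨-, rfl⟩ | ⟨-, rfl⟩
    exacts [Or.inl hs, Or.inl ht]
  · rw [List.sum_append, List.sum_replicate, List.sum_replicate]
    exact hsum

lemma step_linear (u v : ℤ) (huv : (u, v) = (1, 1) ∨ (u, v) = (-2, 1) ∨ (u, v) = (1, -2))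
    (s : ℤ × ℤ) (hs : IsStep s) : (u * s.1 + v * s.2 : ℝ) ≤ 3 * stepCost s := by
  obtain ⟨s1, s2⟩ := s
  have hcases : ((s1,s2) : ℤ × ℤ) = (1,0) ∨ ((s1,s2) : ℤ × ℤ) = (0,1) ∨ ((s1,s2) : ℤ × ℤ) = (-1,-1) ∨
      ((s1,s2) : ℤ × ℤ) = (-1,0) ∨ ((s1,s2) : ℤ × ℤ) = (0,-1) ∨ ((s1,s2) : ℤ × ℤ) = (1,1) := by
    rcases hs with h | h <;> simp only [fwdSteps, List.mem_cons, List.mem_singleton,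
      List.not_mem_nil, or_false, Prod.mk.injEq, Prod.neg_mk, neg_eq_iff_eq_neg] at h <;>
      simp only [Prod.mk.injEq] <;> omega
  rcases huv with h | h | h <;> rw [Prod.ext_iff] at h <;> obtain ⟨rfl, rfl⟩ := h <;>
    rcases hcases with hc | hc | hc | hc | hc | hc <;>
    (rw [Prod.mk.injEq] at hc; obtain ⟨rfl, rfl⟩ := hc) <;>
    simp [stepCost, fwdSteps, Prod.ext_iff] <;> norm_num

lemma pathLen_linear (u v : ℤ) (huv : (u, v) = (1, 1) ∨ (u, v) = (-2, 1) ∨ (u, v) = (1, -2))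
    (l : List (ℤ × ℤ)) (hl : ∀ s ∈ l, IsStep s) :
    (u * l.sum.1 + v * l.sum.2 : ℝ) ≤ 3 * pathLen l := by
  induction l with
  | nil => simp [pathLen]
  | cons s t ih =>
    have h1 := step_linear u v huv s (hl s List.mem_cons_self)
    have h2 := ih (fun x hx => hl x (List.mem_cons_of_mem s hx))
    simp only [List.sum_cons, pathLen, List.map_cons, List.sum_cons, Prod.fst_add,
      Prod.snd_add] at *
    push_cast
    linarith

lemma latticeDist_ge (u v : ℤ) (huv : (u, v) = (1, 1) ∨ (u, v) = (-2, 1) ∨ (u, v) = (1, -2))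
    (p q : ℤ × ℤ) : ((u : ℝ) * (q.1 - p.1) + (v : ℝ) * (q.2 - p.2)) / 3 ≤ latticeDist p q := by
  apply le_csInf
  · obtain ⟨l, h1, h2⟩ := exists_path p q
    exact ⟨pathLen l, l, h1, h2, rfl⟩
  · rintro r ⟨l, hl, hsum, rfl⟩
    have h := pathLen_linear u v huv l hl
    have hx : q.1 - p.1 = l.sum.1 := by rw [← hsum]; simp
    have hy : q.2 - p.2 = l.sum.2 := by rw [← hsum]; simp
    have hx' : (q.1 : ℝ) - p.1 = (l.sum.1 : ℝ) := by exact_mod_cast hx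
    have hy' : (q.2 : ℝ) - p.2 = (l.sum.2 : ℝ) := by exact_mod_cast hy
    rw [hx', hy']
    linarith

theorem tripod_min_on_axes (a b c : ℤ) (hb : 0 ≤ b) (ha : 0 ≤ a) (hca : a ≤ c) :
    ∃ Y : ℤ × ℤ,
      ((∃ s : ℤ, 0 ≤ s ∧ Y = (s, 0)) ∨ (∃ s : ℤ, 0 ≤ s ∧ Y = (0, s))) ∧
      ∀ X : ℤ × ℤ,
        latticeDist (0, a) Y + latticeDist (b, 0) Y + latticeDist (0, c) Y ≤
          latticeDist (0, a) X + latticeDist (b, 0) X + latticeDist (0, c) X := by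
  refine ⟨(0, a), Or.inr ⟨a, ha, rfl⟩, fun X => ?_⟩
  -- upper bounds at Y = (0, a)
  have hU1 : latticeDist (0, a) (0, a) ≤ 0 := by
    have := latticeDist_le (0, a) (0, a) [] (by simp) (by simp)
    simpa [pathLen] using this
  have hU2 : latticeDist (b, 0) (0, a) ≤ ((a : ℝ) + 2 * b) / 3 := by
    have h := latticeDist_le_two_rep (b, 0) (0, a) (-1, -1) (0, 1) (by decide) (by decide)
      b.toNat (a + b).toNat ?_
    · refine h.trans ?_
      have h1 : (b.toNat : ℝ) = (b : ℝ) := by exact_mod_cast (Int.toNat_of_nonneg hb)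
      have h2 : ((a + b).toNat : ℝ) = (a : ℝ) + b := by
        exact_mod_cast (Int.toNat_of_nonneg (by omega : (0:ℤ) ≤ a + b))
      rw [h1, h2]; linarith
    · rw [nsmul_pair, nsmul_pair, Prod.ext_iff]
      constructor <;> simp <;> omega
  have hU3 : latticeDist (0, c) (0, a) ≤ (2 * (c : ℝ) - 2 * a) / 3 := by
    have h := latticeDist_le_two_rep (0, c) (0, a) (1, 0) (-1, -1) (by decide) (by decide)
      (c - a).toNat (c - a).toNat ?_
    · refine h.trans ?_
      have h1 : ((c - a).toNat : ℝ) = (c : ℝ) - a := by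
        exact_mod_cast (Int.toNat_of_nonneg (by omega : (0:ℤ) ≤ c - a))
      rw [h1]; linarith
    · rw [nsmul_pair, nsmul_pair, Prod.ext_iff]
      constructor <;> simp <;> omega
  -- lower bounds at X
  have hL1 := latticeDist_ge 1 1 (Or.inl rfl) (0, a) X
  have hL2 := latticeDist_ge (-2) 1 (Or.inr (Or.inl rfl)) (b, 0) X
  have hL3 := latticeDist_ge 1 (-2) (Or.inr (Or.inr rfl)) (0, c) X
  simp only at hL1 hL2 hL3
  push_cast at hL1 hL2 hL3
  linarith
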